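/- Let X be a Banach space satisfying: for every x, y ∈ B_X and every ε > 0 there exists a net {y_s} ⊆ (1+ε)B_X converging weakly to y with ‖x + y_s‖ ≥ 2 − ε for all s. Then for every x ∈ S_X, every slice S(B_X, f, α) with f ∈ S_{X*} and α > 0, and every ε > 0, there exists y in the slice with ‖x + y‖ > 2 − ε. -/

import Mathlib

open Metric Set Filter

theorem stmt13 {X : Type*} [NormedAddCommGroup X] [NormedSpace ℝ X] [CompleteSpace X]
    (h : ∀ x ∈ closedBall (0 : X) 1, ∀ y ∈ closedBall (0 : X) 1, ∀ ε : ℝ, 0 < ε →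
      ∃ (ι : Type) (l : Filter ι) (ys : ι → X), l.NeBot ∧
        (∀ i, ‖ys i‖ ≤ 1 + ε) ∧ (∀ i, 2 - ε ≤ ‖x + ys i‖) ∧
        ∀ f : X →L[ℝ] ℝ, Tendsto (fun i => f (ys i)) l (nhds (f y))) :
    ∀ x : X, ‖x‖ = 1 → ∀ f : X →L[ℝ] ℝ, ‖f‖ = 1 → ∀ α : ℝ, 0 < α → ∀ ε : ℝ, 0 < ε →
      ∃ y : X, ‖y‖ ≤ 1 ∧ f y > 1 - α ∧ ‖x + y‖ > 2 - ε := by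
  intro x hx f hf α hα ε hε
  set α' : ℝ := min α 1 with hα'def
  have hα'0 : 0 < α' := lt_min hα one_pos
  have hα'le : α' ≤ α := min_le_left _ _
  have hα'1 : α' ≤ 1 := min_le_right _ _
  set δ : ℝ := min (ε / 3) (α' / 4) with hδdef
  have hδ0 : 0 < δ := lt_min (by linarith) (by linarith)
  have hδε : δ ≤ ε / 3 := min_le_left _ _
  have hδα : δ ≤ α' / 4 := min_le_right _ _
  -- find z in the unit ball with f z > 1 - α'/2
  have hr : 1 - α' / 2 < ‖f‖ := by rw [hf]; linarith
  obtain ⟨y₀, hy₀n, hy₀f⟩ := f.exists_lt_apply_of_lt_opNorm hr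
  obtain ⟨z, hzn, hzf⟩ : ∃ z : X, ‖z‖ ≤ 1 ∧ 1 - α' / 2 < f z := by
    rcases le_or_gt 0 (f y₀) with h0 | h0
    · exact ⟨y₀, hy₀n.le, by rwa [Real.norm_eq_abs, abs_of_nonneg h0] at hy₀f⟩
    · refine ⟨-y₀, by simpa using hy₀n.le, ?_⟩
      rw [map_neg]
      rwa [Real.norm_eq_abs, abs_of_neg h0] at hy₀f
  obtain ⟨ι, l, ys, hne, hball, hnorm, htend⟩ :=
    h x (by simpa [mem_closedBall, dist_eq_norm] using hx.le) z
      (by simpa [mem_closedBall, dist_eq_norm] using hzn) δ hδ0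
  have hev : ∀ᶠ i in l, 1 - α' / 2 < f (ys i) :=
    (htend f).eventually (eventually_gt_nhds hzf)
  obtain ⟨i, hi⟩ := hev.exists
  have h1δ : (0:ℝ) < 1 + δ := by linarith
  refine ⟨(1 + δ)⁻¹ • ys i, ?_, ?_, ?_⟩
  · rw [norm_smul, Real.norm_eq_abs, abs_of_pos (inv_pos.2 h1δ)]
    calc (1 + δ)⁻¹ * ‖ys i‖ ≤ (1 + δ)⁻¹ * (1 + δ) :=
          mul_le_mul_of_nonneg_left (hball i) (inv_pos.2 h1δ).le
      _ = 1 := inv_mul_cancel₀ (ne_of_gt h1δ)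
  · rw [map_smul]
    have : 1 - α ≤ 1 - α' := by linarith
    have hgoal : (1 - α) * (1 + δ) < f (ys i) := by nlinarith
    have := (lt_div_iff₀ h1δ).2 hgoal
    simpa [smul_eq_mul, div_eq_inv_mul, mul_comm] using this
  · have hsub : ‖ys i - (1 + δ)⁻¹ • ys i‖ ≤ δ := by
      have : ys i - (1 + δ)⁻¹ • ys i = (1 - (1 + δ)⁻¹) • ys i := by
        rw [sub_smul, one_smul]
      rw [this, norm_smul, Real.norm_eq_abs]
      have h1 : (0:ℝ) ≤ 1 - (1 + δ)⁻¹ := by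
        have : (1 + δ)⁻¹ ≤ 1 := by
          rw [inv_le_one_iff₀]; right; linarith
        linarith
      rw [abs_of_nonneg h1]
      have h2 : 1 - (1 + δ)⁻¹ = δ / (1 + δ) := by field_simp; ring
      rw [h2]
      calc δ / (1 + δ) * ‖ys i‖ ≤ δ / (1 + δ) * (1 + δ) :=
            mul_le_mul_of_nonneg_left (hball i) (by positivity)
        _ = δ := div_mul_cancel₀ _ (ne_of_gt h1δ)
    have htri : ‖x + ys i‖ ≤ ‖x + (1 + δ)⁻¹ • ys i‖ + ‖ys i - (1 + δ)⁻¹ • ys i‖ := by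
      have : x + ys i = (x + (1 + δ)⁻¹ • ys i) + (ys i - (1 + δ)⁻¹ • ys i) := by abel
      rw [this]; exact norm_add_le _ _
    have := hnorm i
    linarith
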